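/- In the setting below, let β⁰ ∈ ℝ^p be a point that is NOT a critical point. Then there exists η₀ > 0 such that for every η with 0 < η ≤ η₀ one has R(S_{ηλ}(β⁰ − η g(β⁰))) < R(β⁰), where S_{ηλ} is applied componentwise. -/

import Mathlib

open Filter

noncomputable def soft (γ v : ℝ) : ℝ :=
  if γ < v then v - γ else if v < -γ then v + γ else 0

def IsCriticalPoint {p : ℕ} (lam : ℝ) (g : (Fin p → ℝ) → (Fin p → ℝ))
    (β : Fin p → ℝ) : Prop :=
  ∀ i, (β i = 0 ∧ |g β i| ≤ lam) ∨ (β i ≠ 0 ∧ g β i + lam * Real.sign (β i) = 0)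

set_option maxHeartbeats 1000000 in
theorem descent_step_at_noncritical_point
    {p : ℕ} (hp : 1 ≤ p) (lam : ℝ) (hlam : 0 < lam)
    (g : (Fin p → ℝ) → (Fin p → ℝ)) (hg : Continuous g)
    (R : (Fin p → ℝ) → ℝ) (hR : Continuous R)
    (hdiff : ∀ β : Fin p → ℝ, (∀ i, β i ≠ 0) →
      DifferentiableAt ℝ R β ∧
      ∀ i, fderiv ℝ R β (Pi.single i 1) = g β i + lam * Real.sign (β i))
    (β0 : Fin p → ℝ) (hnc : ¬ IsCriticalPoint lam g β0) :
    ∃ η0 > 0, ∀ η : ℝ, 0 < η → η ≤ η0 →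
      R (fun i => soft (η * lam) (β0 i - η * g β0 i)) < R β0 := by
  classical
  set b : Fin p → ℝ := β0 with hbdef
  set G : Fin p → ℝ := g β0 with hGdef
  set d : Fin p → ℝ := fun j =>
    if b j = 0 then (if lam < |G j| then lam * Real.sign (G j) - G j else 0)
    else -(G j + lam * Real.sign (b j)) with hddef
  set s : Fin p → ℝ := fun j =>
    if b j = 0 then -Real.sign (G j) else Real.sign (b j) with hsdef
  set w : Fin p → ℝ := fun j =>
    if b j = 0 then (if lam < |G j| then -Real.sign (G j) else 1) else 0 with hwdef
  -- noncritical coordinate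
  obtain ⟨i, hi⟩ : ∃ i, ¬((b i = 0 ∧ |G i| ≤ lam) ∨ (b i ≠ 0 ∧ G i + lam * Real.sign (b i) = 0)) := by
    by_contra h
    push_neg at h
    exact hnc fun i => h i
  have hdi : d i ≠ 0 := by
    push_neg at hi
    obtain ⟨h1, h2⟩ := hi
    by_cases hb0 : b i = 0
    · have hGl : lam < |G i| := h1 hb0
      have hGne : G i ≠ 0 := by
        intro h; rw [h] at hGl; simp at hGl; linarith
      have hdi' : d i = lam * Real.sign (G i) - G i := by
        simp only [hddef]; rw [if_pos hb0, if_pos hGl]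
      rcases lt_or_gt_of_ne hGne with h | h
      · rw [hdi', Real.sign_of_neg h]
        have habs : |G i| = -G i := abs_of_neg h
        intro hc; rw [sub_eq_zero] at hc; nlinarith
      · rw [hdi', Real.sign_of_pos h]
        have habs : |G i| = G i := abs_of_pos h
        intro hc; rw [sub_eq_zero] at hc; nlinarith
    · have h2' := h2 hb0
      have hdi' : d i = -(G i + lam * Real.sign (b i)) := by
        simp only [hddef]; rw [if_neg hb0]
      rw [hdi', neg_ne_zero]
      exact h2'
  have hcpos : 0 < d i ^ 2 := by positivity
  set c : ℝ := d i ^ 2 / 2 with hcdef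
  have hc : 0 < c := by rw [hcdef]; linarith
  have hterm : ∀ j, d j * (G j + lam * s j) = -(d j ^ 2) := by
    intro j
    by_cases hb0 : b j = 0
    · by_cases hGl : lam < |G j|
      · have hGne : G j ≠ 0 := by intro h; rw [h] at hGl; simp at hGl; linarith
        have hd' : d j = lam * Real.sign (G j) - G j := by
          simp only [hddef]; rw [if_pos hb0, if_pos hGl]
        have hs' : s j = -Real.sign (G j) := by simp only [hsdef]; rw [if_pos hb0]
        rcases lt_or_gt_of_ne hGne with h | h
        · rw [hd', hs', Real.sign_of_neg h]; ring
        · rw [hd', hs', Real.sign_of_pos h]; ring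
      · have hd' : d j = 0 := by simp only [hddef]; rw [if_pos hb0, if_neg hGl]
        rw [hd']; ring
    · have hd' : d j = -(G j + lam * Real.sign (b j)) := by
        simp only [hddef]; rw [if_neg hb0]
      have hs' : s j = Real.sign (b j) := by simp only [hsdef]; rw [if_neg hb0]
      rw [hd', hs']; ring
  set Φ : ℝ × ℝ → ℝ :=
    fun q => ∑ j, d j * (g (fun k => b k + q.1 * w k + q.2 * d k) j + lam * s j) with hPhidef
  have hPhicont : Continuous Φ := by
    apply continuous_finset_sum
    intro j _
    apply Continuous.mul continuous_const
    apply Continuous.add _ continuous_const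
    have hm : Continuous (fun q : ℝ × ℝ => (fun k => b k + q.1 * w k + q.2 * d k)) := by
      apply continuous_pi; intro k
      exact (continuous_const.add (continuous_fst.mul continuous_const)).add
        (continuous_snd.mul continuous_const)
    exact (continuous_apply j).comp (hg.comp hm)
  have hPhi00 : Φ (0, 0) ≤ -(2 * c) := by
    have hx : (fun k => b k + (0:ℝ) * w k + (0:ℝ) * d k) = b := by funext k; ring
    have h1 : Φ (0,0) = ∑ j, d j * (G j + lam * s j) := by
      simp only [hPhidef, hx]; rfl
    have h2 : Φ (0,0) = -∑ j, d j ^ 2 := by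
      rw [h1, Finset.sum_congr rfl fun j _ => hterm j, Finset.sum_neg_distrib]
    have h3 : d i ^ 2 ≤ ∑ j, d j ^ 2 :=
      Finset.single_le_sum (f := fun j => d j ^ 2) (fun j _ => sq_nonneg _) (Finset.mem_univ i)
    rw [h2, hcdef]; linarith
  obtain ⟨δ, hδpos, hδ⟩ : ∃ δ > 0, ∀ q : ℝ × ℝ, dist q (0,0) < δ → Φ q < -c := by
    have hopen : IsOpen (Φ ⁻¹' Set.Iio (-c)) := (isOpen_Iio).preimage hPhicont
    have hmem : ((0:ℝ),(0:ℝ)) ∈ Φ ⁻¹' Set.Iio (-c) := by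
      simp only [Set.mem_preimage, Set.mem_Iio]; linarith
    obtain ⟨δ, hδpos, hball⟩ := Metric.isOpen_iff.mp hopen _ hmem
    exact ⟨δ, hδpos, fun q hq => hball (Metric.mem_ball.mpr hq)⟩
  have hne : (Finset.univ : Finset (Fin p)).Nonempty := ⟨⟨0, by omega⟩, Finset.mem_univ _⟩
  set A : ℝ := Finset.univ.inf' hne (fun j => if b j = 0 then 1 else |b j| / (|d j| + 1)) with hAdef
  have hApos : 0 < A := by
    rw [hAdef, Finset.lt_inf'_iff]
    intro j _
    by_cases hb0 : b j = 0
    · rw [if_pos hb0]; norm_num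
    · rw [if_neg hb0]; exact div_pos (abs_pos.mpr hb0) (by positivity)
  set η1 : ℝ := min A (δ/2) with hη1def
  have hη1pos : 0 < η1 := lt_min hApos (by linarith)
  have hη1δ : η1 < δ := lt_of_le_of_lt (min_le_right _ _) (by linarith)
  have hkey : ∀ j, b j ≠ 0 → η1 * |d j| < |b j| := by
    intro j hb0
    have hA1 : A ≤ |b j| / (|d j| + 1) := by
      rw [hAdef]
      refine le_trans (Finset.inf'_le _ (Finset.mem_univ j)) ?_
      rw [if_neg hb0]
    have h1 : η1 ≤ |b j| / (|d j| + 1) := le_trans (min_le_left _ _) hA1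
    have hbpos : 0 < |b j| := abs_pos.mpr hb0
    have h2 : |b j| / (|d j| + 1) * |d j| < |b j| := by
      rw [div_mul_eq_mul_div, div_lt_iff₀ (by positivity)]
      nlinarith [abs_nonneg (d j)]
    calc η1 * |d j| ≤ |b j| / (|d j| + 1) * |d j| :=
          mul_le_mul_of_nonneg_right h1 (abs_nonneg _)
      _ < |b j| := h2
  have hC : ∀ (ε ξ : ℝ), 0 < ε → 0 ≤ ξ → ξ ≤ η1 → ∀ j,
      (b j + ε * w j + ξ * d j ≠ 0) ∧
      (d j ≠ 0 → Real.sign (b j + ε * w j + ξ * d j) = s j) := by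
    intro ε ξ hε hξ0 hξ1 j
    by_cases hb0 : b j = 0
    · by_cases hGl : lam < |G j|
      · have hGne : G j ≠ 0 := by intro h; rw [h] at hGl; simp at hGl; linarith
        have hw' : w j = -Real.sign (G j) := by
          simp only [hwdef]; rw [if_pos hb0, if_pos hGl]
        have hd' : d j = lam * Real.sign (G j) - G j := by
          simp only [hddef]; rw [if_pos hb0, if_pos hGl]
        have hs' : s j = -Real.sign (G j) := by simp only [hsdef]; rw [if_pos hb0]
        rcases lt_or_gt_of_ne hGne with h | h
        · rw [Real.sign_of_neg h] at hw' hd' hs'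
          have habs : |G j| = -G j := abs_of_neg h
          have hdpos : 0 < d j := by rw [hd']; nlinarith
          have hxpos : 0 < b j + ε * w j + ξ * d j := by
            rw [hb0, hw']
            have h0 : 0 ≤ ξ * d j := mul_nonneg hξ0 hdpos.le
            nlinarith
          exact ⟨ne_of_gt hxpos, fun _ => by rw [Real.sign_of_pos hxpos, hs']; ring⟩
        · rw [Real.sign_of_pos h] at hw' hd' hs'
          have habs : |G j| = G j := abs_of_pos h
          have hdneg : d j < 0 := by rw [hd']; nlinarith
          have hxneg : b j + ε * w j + ξ * d j < 0 := by
            rw [hb0, hw']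
            have h0 : ξ * d j ≤ 0 := mul_nonpos_of_nonneg_of_nonpos hξ0 hdneg.le
            nlinarith
          exact ⟨ne_of_lt hxneg, fun _ => by rw [Real.sign_of_neg hxneg, hs']⟩
      · have hd' : d j = 0 := by simp only [hddef]; rw [if_pos hb0, if_neg hGl]
        have hw' : w j = 1 := by simp only [hwdef]; rw [if_pos hb0, if_neg hGl]
        constructor
        · have hxval : b j + ε * w j + ξ * d j = ε := by rw [hb0, hd', hw']; ring
          rw [hxval]; exact ne_of_gt hε
        · intro hdj; exact absurd hd' hdj
    · have hw' : w j = 0 := by simp only [hwdef]; rw [if_neg hb0]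
      have hs' : s j = Real.sign (b j) := by simp only [hsdef]; rw [if_neg hb0]
      have hbound : ξ * |d j| < |b j| :=
        lt_of_le_of_lt (mul_le_mul_of_nonneg_right hξ1 (abs_nonneg _)) (hkey j hb0)
      rcases lt_or_gt_of_ne hb0 with h | h
      · have habs : |b j| = -b j := abs_of_neg h
        have h1 : ξ * d j ≤ ξ * |d j| := mul_le_mul_of_nonneg_left (le_abs_self _) hξ0
        have hxneg : b j + ε * w j + ξ * d j < 0 := by rw [hw']; nlinarith
        exact ⟨ne_of_lt hxneg, fun _ => by
          rw [Real.sign_of_neg hxneg, hs', Real.sign_of_neg h]⟩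
      · have habs : |b j| = b j := abs_of_pos h
        have h1 : -(ξ * |d j|) ≤ ξ * d j := by
          have h2 : -|d j| ≤ d j := neg_abs_le (d j)
          nlinarith
        have hxpos : 0 < b j + ε * w j + ξ * d j := by rw [hw']; nlinarith
        exact ⟨ne_of_gt hxpos, fun _ => by
          rw [Real.sign_of_pos hxpos, hs', Real.sign_of_pos h]⟩
  have hB : ∀ η : ℝ, 0 < η → η ≤ η1 → ∀ j,
      soft (η * lam) (b j - η * G j) = b j + η * d j := by
    intro η hη hηle j
    have hetalam : 0 < η * lam := mul_pos hη hlam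
    by_cases hb0 : b j = 0
    · by_cases hGl : lam < |G j|
      · have hGne : G j ≠ 0 := by intro h; rw [h] at hGl; simp at hGl; linarith
        have hd' : d j = lam * Real.sign (G j) - G j := by
          simp only [hddef]; rw [if_pos hb0, if_pos hGl]
        rcases lt_or_gt_of_ne hGne with h | h
        · have habs : |G j| = -G j := abs_of_neg h
          have hv : η * lam < b j - η * G j := by rw [hb0]; nlinarith
          rw [soft, if_pos hv, hd', Real.sign_of_neg h, hb0]; ring
        · have habs : |G j| = G j := abs_of_pos h
          have hv : b j - η * G j < -(η * lam) := by rw [hb0]; nlinarith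
          have hv2 : ¬ (η * lam < b j - η * G j) := by push_neg; nlinarith
          rw [soft, if_neg hv2, if_pos hv, hd', Real.sign_of_pos h, hb0]; ring
      · push_neg at hGl
        have habs1 : G j ≤ lam := le_trans (le_abs_self _) hGl
        have habs2 : -lam ≤ G j := by have := neg_abs_le (G j); linarith
        have hd' : d j = 0 := by simp only [hddef]; rw [if_pos hb0, if_neg (not_lt.mpr hGl)]
        have hv1 : ¬ (η * lam < b j - η * G j) := by push_neg; rw [hb0]; nlinarith
        have hv2 : ¬ (b j - η * G j < -(η * lam)) := by push_neg; rw [hb0]; nlinarith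
        rw [soft, if_neg hv1, if_neg hv2, hd', hb0]; ring
    · have hd' : d j = -(G j + lam * Real.sign (b j)) := by
        simp only [hddef]; rw [if_neg hb0]
      have hbound : η * |d j| < |b j| :=
        lt_of_le_of_lt (mul_le_mul_of_nonneg_right hηle (abs_nonneg _)) (hkey j hb0)
      rcases lt_or_gt_of_ne hb0 with h | h
      · have habs : |b j| = -b j := abs_of_neg h
        rw [Real.sign_of_neg h] at hd'
        have hdabs : η * d j ≤ η * |d j| := mul_le_mul_of_nonneg_left (le_abs_self _) hη.le
        have hxneg : b j + η * d j < 0 := by nlinarith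
        have hv : b j - η * G j < -(η * lam) := by rw [hd'] at hxneg; nlinarith
        have hv2 : ¬ (η * lam < b j - η * G j) := by push_neg; nlinarith
        rw [soft, if_neg hv2, if_pos hv, hd']; ring
      · have habs : |b j| = b j := abs_of_pos h
        rw [Real.sign_of_pos h] at hd'
        have hdabs : -(η * |d j|) ≤ η * d j := by
          have h2 : -|d j| ≤ d j := neg_abs_le (d j)
          nlinarith
        have hxpos : 0 < b j + η * d j := by nlinarith
        have hv : η * lam < b j - η * G j := by rw [hd'] at hxpos; nlinarith
        rw [soft, if_pos hv, hd']; ring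
  have hA2 : ∀ (ε : ℝ), 0 < ε → ∀ ξ : ℝ, 0 ≤ ξ → ξ ≤ η1 →
      HasDerivAt (fun t : ℝ => R (fun j => b j + ε * w j + t * d j)) (Φ (ε, ξ)) ξ := by
    intro ε hε ξ hξ0 hξ1
    set x : Fin p → ℝ := fun j => b j + ε * w j + ξ * d j with hxdef
    have hxne : ∀ j, x j ≠ 0 := fun j => (hC ε ξ hε hξ0 hξ1 j).1
    obtain ⟨hRd, hpart⟩ := hdiff x hxne
    have hpath : HasDerivAt (fun t : ℝ => (fun j => b j + ε * w j + t * d j)) d ξ := by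
      rw [hasDerivAt_pi]
      intro j
      simpa using (hasDerivAt_mul_const (d j)).const_add (b j + ε * w j)
    have hcomp := hRd.hasFDerivAt.comp_hasDerivAt ξ hpath
    have hval : fderiv ℝ R x d = Φ (ε, ξ) := by
      have hdsum : d = ∑ j, Pi.single j (d j) := (Finset.univ_sum_single d).symm
      calc fderiv ℝ R x d = fderiv ℝ R x (∑ j, Pi.single j (d j)) := by rw [← hdsum]
        _ = ∑ j, fderiv ℝ R x (Pi.single j (d j)) := map_sum _ _ _
        _ = ∑ j, d j * (g x j + lam * Real.sign (x j)) := by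
            refine Finset.sum_congr rfl fun j _ => ?_
            have hsingle : Pi.single j (d j) = d j • (Pi.single j (1:ℝ) : Fin p → ℝ) := by
              funext k
              by_cases h : k = j <;> simp [Pi.single_apply, h]
            rw [hsingle, map_smul, hpart j]; simp [smul_eq_mul]
        _ = Φ (ε, ξ) := by
            simp only [hPhidef]
            refine Finset.sum_congr rfl fun j _ => ?_
            rcases eq_or_ne (d j) 0 with h | h
            · simp [h]
            · rw [(hC ε ξ hε hξ0 hξ1 j).2 h]
    exact hval ▸ hcomp
  refine ⟨η1, hη1pos, ?_⟩
  intro η hη hηle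
  have hsoft : (fun i => soft (η * lam) (β0 i - η * g β0 i)) = fun j => b j + η * d j := by
    funext j; exact hB η hη hηle j
  rw [hsoft]
  have hkey2 : ∀ ε : ℝ, ε ∈ Set.Ioo (0:ℝ) δ →
      R (fun j => b j + ε * w j + η * d j) - R (fun j => b j + ε * w j + 0 * d j)
        ≤ η * (-c) := by
    rintro ε ⟨hε, hεδ⟩
    obtain ⟨ξ, hξmem, hslope⟩ := exists_hasDerivAt_eq_slope
      (fun t => R (fun j => b j + ε * w j + t * d j)) (fun t => Φ (ε, t)) hη
      (fun t ht => ((hA2 ε hε t ht.1 (le_trans ht.2 hηle)).continuousAt.continuousWithinAt))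
      (fun t ht => hA2 ε hε t ht.1.le (le_trans ht.2.le hηle))
    have hΦ : Φ (ε, ξ) < -c := by
      apply hδ
      rw [Prod.dist_eq]
      have h1 : dist ε (0:ℝ) < δ := by rw [Real.dist_eq, sub_zero, abs_of_pos hε]; exact hεδ
      have h2 : dist ξ (0:ℝ) < δ := by
        rw [Real.dist_eq, sub_zero, abs_of_pos hξmem.1]
        linarith [hξmem.2, hηle, hη1δ]
      exact max_lt h1 h2
    rw [sub_zero, eq_div_iff (ne_of_gt hη)] at hslope
    have hmul : Φ (ε, ξ) * η ≤ -c * η := mul_le_mul_of_nonneg_right hΦ.le hη.le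
    rw [hslope] at hmul
    linarith
  have htend : Tendsto (fun ε : ℝ =>
      R (fun j => b j + ε * w j + η * d j) - R (fun j => b j + ε * w j + 0 * d j))
      (nhdsWithin (0:ℝ) (Set.Ioi 0)) (nhds (R (fun j => b j + η * d j) - R b)) := by
    have hm : ∀ t : ℝ, Continuous (fun ε : ℝ => (fun j => b j + ε * w j + t * d j)) := by
      intro t
      apply continuous_pi; intro k
      exact (continuous_const.add (continuous_id.mul continuous_const)).add continuous_const
    have hc1 : Continuous fun ε : ℝ => R (fun j => b j + ε * w j + η * d j) :=
      hR.comp (hm η)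
    have hc2 : Continuous fun ε : ℝ => R (fun j => b j + ε * w j + 0 * d j) :=
      hR.comp (hm 0)
    have hT := ((hc1.tendsto 0).sub (hc2.tendsto 0)).mono_left
      (nhdsWithin_le_nhds (s := Set.Ioi (0:ℝ)))
    have he1 : (fun j => b j + (0:ℝ) * w j + η * d j) = fun j => b j + η * d j := by
      funext j; ring
    have he2 : (fun j => b j + (0:ℝ) * w j + 0 * d j) = b := by funext j; ring
    rw [he1, he2] at hT
    exact hT
  have hfin : R (fun j => b j + η * d j) - R b ≤ η * (-c) :=
    le_of_tendsto htend (Filter.eventually_of_mem (Ioo_mem_nhdsGT hδpos) hkey2)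
  have hneg : η * (-c) < 0 := by nlinarith
  linarith
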